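/- The expected Fisher information matrix I(θ) of the rank-one PCP model, a square matrix of order Σ_{p=1}^P N_p, is singular and has rank exactly r = (Σ_{p=1}^P N_p) − P + 1; equivalently, its null space has dimension P − 1. -/

import Mathlib

open Finset

noncomputable section

variable {P : ℕ} {N : Fin P → ℕ}

/-- Factor sum `λ_p = Σ_j a_p(j)`. -/
def lam1 (a : (p : Fin P) → Fin (N p) → ℝ) (p : Fin P) : ℝ :=
  ∑ j, a p j

/-- Index set of the parameter vector `θ`: a pair of a mode `p` and a coordinate of
`a_p`; its cardinality is `Σ_p N_p`. -/
abbrev FullIdx (N : Fin P → ℕ) := (p : Fin P) × Fin (N p)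

/-- **Expected Fisher information matrix of the rank-one PCP model**: the symmetric
`(Σ_p N_p) × (Σ_p N_p)` block matrix whose `(p,p)` diagonal block has `(i,j)` entry
`[i = j] · λ/(λ_p a_p(i))` and whose `(p,q)` off-diagonal block (`p ≠ q`) has every
entry equal to `λ/(λ_p λ_q)`, where `λ = λ_1 ⋯ λ_P`. -/
def fim (a : (p : Fin P) → Fin (N p) → ℝ) : Matrix (FullIdx N) (FullIdx N) ℝ :=
  fun x y =>
    if x = y then (∏ p, lam1 a p) / (lam1 a x.1 * a x.1 x.2)
    else if x.1 = y.1 then 0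
    else (∏ p, lam1 a p) / (lam1 a x.1 * lam1 a y.1)

/-- Retained indices: all coordinates of `a_1`, and all but the first coordinate of
each `a_p` for `p ∈ {2,…,P}`. -/
abbrev RetIdx (N : Fin P → ℕ) := {x : FullIdx N // (x.1 : ℕ) = 0 ∨ (x.2 : ℕ) ≠ 0}

/-- Deleted indices: the first coordinate of each `a_p` for `p ∈ {2,…,P}`. -/
abbrev DelIdx (N : Fin P → ℕ) := {x : FullIdx N // ¬((x.1 : ℕ) = 0 ∨ (x.2 : ℕ) ≠ 0)}

/-- `I_F`: the principal submatrix of `I(θ)` on the retained indices. -/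
def fimF (a : (p : Fin P) → Fin (N p) → ℝ) : Matrix (RetIdx N) (RetIdx N) ℝ :=
  fun x y => fim a x.1 y.1

/-- `I_{F,N}`: the deleted rows of `I(θ)` restricted to the retained columns. -/
def fimFN (a : (p : Fin P) → Fin (N p) → ℝ) : Matrix (DelIdx N) (RetIdx N) ℝ :=
  fun x y => fim a x.1 y.1

/-- `I_N`: the principal submatrix of `I(θ)` on the deleted indices. -/
def fimN (a : (p : Fin P) → Fin (N p) → ℝ) : Matrix (DelIdx N) (DelIdx N) ℝ :=
  fun x y => fim a x.1 y.1

/-- Auxiliary: linear map sending coefficients `c : Fin P → ℝ` to the vector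
whose `(p,i)` entry is `c p * a p i`. -/
def Lmap (a : (p : Fin P) → Fin (N p) → ℝ) : (Fin P → ℝ) →ₗ[ℝ] (FullIdx N → ℝ) where
  toFun c := fun x => c x.1 * a x.1 x.2
  map_add' c d := by funext x; simp [add_mul]
  map_smul' r c := by funext x; simp [mul_assoc]

/-- Auxiliary: summation functional on `Fin P → ℝ`. -/
def sumL (P : ℕ) : (Fin P → ℝ) →ₗ[ℝ] ℝ where
  toFun c := ∑ p, c p
  map_add' c d := by simp [Finset.sum_add_distrib]
  map_smul' r c := by simp [Finset.mul_sum]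

/-- **Rank of the expected Fisher information matrix.** The expected Fisher
information `I(θ)` of the rank-one PCP model, a square matrix of order `Σ_p N_p`, is
singular (zero determinant) with rank exactly `r = (Σ_p N_p) − P + 1`; equivalently,
its null space has dimension `P − 1`. -/
theorem stmt_18 (P : ℕ) (hP : 2 ≤ P) (N : Fin P → ℕ) (hN : ∀ p, 1 ≤ N p)
    (a : (p : Fin P) → Fin (N p) → ℝ) (ha : ∀ p j, 0 < a p j) :
    (fim a).det = 0 ∧
    (fim a).rank = (∑ p, N p) - P + 1 ∧
    Module.finrank ℝ (LinearMap.ker (fim a).mulVecLin) = P - 1 := by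
  classical
  have hNe : ∀ p : Fin P, Nonempty (Fin (N p)) := fun p => ⟨⟨0, hN p⟩⟩
  have hl : ∀ p, 0 < lam1 a p := fun p => by
    haveI := hNe p
    exact Finset.sum_pos (fun j _ => ha p j) Finset.univ_nonempty
  set Λ : ℝ := ∏ p, lam1 a p with hΛdef
  have hΛ : 0 < Λ := Finset.prod_pos (fun p _ => hl p)
  -- the mulVec formula
  have key : ∀ (v : FullIdx N → ℝ) (p : Fin P) (i : Fin (N p)),
      (fim a).mulVec v ⟨p, i⟩ =
        Λ / lam1 a p *
          (v ⟨p, i⟩ / a p i + ∑ q ∈ Finset.univ.erase p, (∑ j, v ⟨q, j⟩) / lam1 a q) := by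
    intro v p i
    have expand : (fim a).mulVec v ⟨p, i⟩ = ∑ q, ∑ j, fim a ⟨p, i⟩ ⟨q, j⟩ * v ⟨q, j⟩ := by
      rw [Matrix.mulVec, dotProduct, ← Finset.univ_sigma_univ, Finset.sum_sigma]
    rw [expand, ← Finset.sum_erase_add _ _ (Finset.mem_univ p)]
    have hdiag : ∑ j, fim a ⟨p, i⟩ ⟨p, j⟩ * v ⟨p, j⟩
        = Λ / (lam1 a p * a p i) * v ⟨p, i⟩ := by
      have : ∀ j, fim a ⟨p, i⟩ ⟨p, j⟩ * v ⟨p, j⟩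
          = if i = j then Λ / (lam1 a p * a p i) * v ⟨p, j⟩ else 0 := by
        intro j
        by_cases h : i = j
        · subst h; simp [fim, hΛdef]
        · have hne : (⟨p, i⟩ : FullIdx N) ≠ ⟨p, j⟩ :=
            fun hh => h (by cases hh; rfl)
          simp [fim, hne, h]
      rw [Finset.sum_congr rfl fun j _ => this j]
      simp
    have hoff : ∀ q ∈ Finset.univ.erase p,
        ∑ j, fim a ⟨p, i⟩ ⟨q, j⟩ * v ⟨q, j⟩
          = Λ / (lam1 a p * lam1 a q) * ∑ j, v ⟨q, j⟩ := by
      intro q hq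
      have hqp : q ≠ p := Finset.ne_of_mem_erase hq
      have : ∀ j : Fin (N q), fim a ⟨p, i⟩ ⟨q, j⟩ = Λ / (lam1 a p * lam1 a q) := by
        intro j
        have hne : (⟨p, i⟩ : FullIdx N) ≠ ⟨q, j⟩ :=
          fun hh => hqp (congrArg Sigma.fst hh).symm
        simp [fim, hne, hqp.symm, hΛdef]
      rw [Finset.mul_sum]
      exact Finset.sum_congr rfl fun j _ => by rw [this j]
    rw [hdiag, Finset.sum_congr rfl hoff, mul_add, Finset.mul_sum]
    rw [add_comm]
    congr 1
    · ring
    · exact Finset.sum_congr rfl fun q _ => by ring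
  -- kernel characterization
  have hLinj : Function.Injective (Lmap a) := by
    intro c d h
    funext p
    have := congrFun h ⟨p, ⟨0, hN p⟩⟩
    simp only [Lmap, LinearMap.coe_mk, AddHom.coe_mk] at this
    exact mul_right_cancel₀ (ha p ⟨0, hN p⟩).ne' this
  have hker : LinearMap.ker (fim a).mulVecLin
      = (LinearMap.ker (sumL P)).map (Lmap a) := by
    ext v
    simp only [Submodule.mem_map, LinearMap.mem_ker]
    constructor
    · intro hv
      set c : Fin P → ℝ := fun q => (∑ j, v ⟨q, j⟩) / lam1 a q with hcdef
      have hE : ∀ (p : Fin P) (i : Fin (N p)),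
          v ⟨p, i⟩ / a p i + ∑ q ∈ Finset.univ.erase p, c q = 0 := by
        intro p i
        have h0 : (fim a).mulVec v ⟨p, i⟩ = 0 := by
          have := congrFun hv ⟨p, i⟩
          simpa [Matrix.mulVecLin_apply] using this
        rw [key v p i] at h0
        have hne : Λ / lam1 a p ≠ 0 := div_ne_zero hΛ.ne' (hl p).ne'
        exact (mul_eq_zero.mp h0).resolve_left hne
      have hv2 : ∀ (p : Fin P) (i : Fin (N p)),
          v ⟨p, i⟩ = (-(∑ q ∈ Finset.univ.erase p, c q)) * a p i := by
        intro p i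
        have h1 : v ⟨p, i⟩ / a p i = -(∑ q ∈ Finset.univ.erase p, c q) := by
          linarith [hE p i]
        rw [div_eq_iff (ha p i).ne'] at h1
        exact h1
      have hc2 : ∀ p : Fin P, c p = -(∑ q ∈ Finset.univ.erase p, c q) := by
        intro p
        have hs : (∑ j, v ⟨p, j⟩)
            = (-(∑ q ∈ Finset.univ.erase p, c q)) * lam1 a p := by
          rw [lam1, Finset.mul_sum]
          exact Finset.sum_congr rfl fun j _ => hv2 p j
        show (∑ j, v ⟨p, j⟩) / lam1 a p = _
        rw [hs, mul_div_assoc, div_self (hl p).ne', mul_one]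
      refine ⟨c, ?_, ?_⟩
      · have p0 : Fin P := ⟨0, by omega⟩
        show ∑ q, c q = 0
        rw [← Finset.sum_erase_add _ _ (Finset.mem_univ p0), hc2 p0]
        ring
      · funext x
        obtain ⟨p, i⟩ := x
        show c p * a p i = v ⟨p, i⟩
        rw [hv2 p i, hc2 p]
    · rintro ⟨c, hc0, rfl⟩
      have hc0' : ∑ q, c q = 0 := hc0
      funext x
      obtain ⟨p, i⟩ := x
      rw [Matrix.mulVecLin_apply, key]
      have e1 : (Lmap a c) ⟨p, i⟩ / a p i = c p := by
        show c p * a p i / a p i = c p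
        exact mul_div_cancel_right₀ _ (ha p i).ne'
      have e2 : ∀ q ∈ Finset.univ.erase p,
          (∑ j, (Lmap a c) ⟨q, j⟩) / lam1 a q = c q := by
        intro q _
        have : (∑ j, (Lmap a c) ⟨q, j⟩) = c q * lam1 a q := by
          rw [lam1, Finset.mul_sum]; rfl
        rw [this, mul_div_assoc, div_self (hl q).ne', mul_one]
      rw [e1, Finset.sum_congr rfl e2]
      have : c p + ∑ q ∈ Finset.univ.erase p, c q = 0 := by
        rw [add_comm, Finset.sum_erase_add _ _ (Finset.mem_univ p)]
        exact hc0'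
      rw [this, mul_zero]
      rfl
  -- dimension of kernel of sumL
  have hsur : Function.Surjective (sumL P) := by
    intro r
    refine ⟨Pi.single ⟨0, by omega⟩ r, ?_⟩
    show ∑ q, Pi.single (⟨0, by omega⟩ : Fin P) r q = r
    simp
  have hPfun : Module.finrank ℝ (Fin P → ℝ) = P := by
    simp [Module.finrank_fintype_fun_eq_card]
  have h1 : Module.finrank ℝ (LinearMap.ker (sumL P)) = P - 1 := by
    have hrn := LinearMap.finrank_range_add_finrank_ker (sumL P)
    rw [LinearMap.range_eq_top.mpr hsur, finrank_top, Module.finrank_self, hPfun] at hrn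
    omega
  have hkerrank : Module.finrank ℝ (LinearMap.ker (fim a).mulVecLin) = P - 1 := by
    have heq := (Submodule.equivMapOfInjective (Lmap a) hLinj
      (LinearMap.ker (sumL P))).finrank_eq
    rw [hker, ← heq, h1]
  have hcard : Fintype.card (FullIdx N) = ∑ p, N p := by
    simp [Fintype.card_sigma]
  have hSP : P ≤ ∑ p, N p := by
    calc P = ∑ _p : Fin P, 1 := by simp
    _ ≤ ∑ p, N p := Finset.sum_le_sum fun p _ => hN p
  have hrank : (fim a).rank = (∑ p, N p) - P + 1 := by
    have hrn := LinearMap.finrank_range_add_finrank_ker (fim a).mulVecLin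
    rw [hkerrank, Module.finrank_fintype_fun_eq_card, hcard] at hrn
    rw [Matrix.rank]
    omega
  have hdet : (fim a).det = 0 := by
    rw [← Matrix.exists_mulVec_eq_zero_iff]
    have hne : LinearMap.ker (fim a).mulVecLin ≠ ⊥ := by
      intro h
      rw [h, finrank_bot] at hkerrank
      omega
    obtain ⟨v, hv, hv0⟩ := (Submodule.ne_bot_iff _).mp hne
    exact ⟨v, hv0, by simpa [Matrix.mulVecLin_apply] using hv⟩
  exact ⟨hdet, hrank, hkerrank⟩
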